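/- (Plücker-type relation for universal characters, second identity) For integers u, v ≥ 1: S_{[(u+1)!,(v−1)!]} · S_{[(u−1)!,(v+1)!]} − S_{[u!,(v+2,v−1,...,1)]} · S_{[(u+2,u−1,...,1),v!]} + S_{[(u+2,u−1,...,1),(v+2,v−1,...,1)]} · S_{[u!,v!]} = 0, where k! = (k,k−1,...,1) and (k+2,k−1,...,1) is the staircase with top part increased by 2. -/

import Mathlib

open PowerSeries Finset MvPolynomial

noncomputable section

/-- The polynomial ring ℚ[x₁,x₂,…,y₁,y₂,…]: `Sum.inl n ↔ xₙ`, `Sum.inr n ↔ yₙ`. -/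
abbrev R2 := MvPolynomial (ℕ ⊕ ℕ) ℚ

/-- Formal exponential of a power series (intended for series with zero constant term). -/
def expPS {A : Type*} [CommRing A] [Algebra ℚ A] (f : PowerSeries A) : PowerSeries A :=
  PowerSeries.mk fun n =>
    ∑ k ∈ Finset.range (n + 1), (k.factorial : ℚ)⁻¹ • (PowerSeries.coeff n (f ^ k))

/-- ξ(x,z) = ∑_{n ≥ 1} x_n z^n. -/
def xiX : PowerSeries R2 :=
  PowerSeries.mk fun n => if n = 0 then 0 else MvPolynomial.X (Sum.inl n)

/-- ξ(y,z) = ∑_{n ≥ 1} y_n z^n. -/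
def xiY : PowerSeries R2 :=
  PowerSeries.mk fun n => if n = 0 then 0 else MvPolynomial.X (Sum.inr n)

/-- p_n(x), defined by ∑_{n≥0} p_n(x) z^n = exp(ξ(x,z)). -/
def px (n : ℕ) : R2 := PowerSeries.coeff n (expPS xiX)

/-- q_n(y) = p_n(y). -/
def qy (n : ℕ) : R2 := PowerSeries.coeff n (expPS xiY)

/-- p_n for n ∈ ℤ, with p_{-n} = 0 for n > 0. -/
def pzx (n : ℤ) : R2 := if n < 0 then 0 else px n.toNat

/-- q_n for n ∈ ℤ, with q_{-n} = 0 for n > 0. -/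
def qzy (n : ℤ) : R2 := if n < 0 then 0 else qy n.toNat

/-- The universal character S_{[λ,μ]}(x,y) attached to λ = (λ₁,…,λ_l), μ = (μ₁,…,μ_{l'})
(`lam i` is λ_{i+1}, `mu i` is μ_{i+1}): the determinant whose row i (1-based), for
1 ≤ i ≤ l', has entries q_{μ_{l'-i+1}+i-j}(y), and for l'+1 ≤ i ≤ l+l' has entries
p_{λ_{i-l'}-i+j}(x), j = 1,…,l+l'. -/
def ucChar (l l' : ℕ) (lam : Fin l → ℕ) (mu : Fin l' → ℕ) : R2 :=
  Matrix.det (Matrix.of fun i j : Fin (l' + l) =>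
    if h : (i : ℕ) < l' then
      qzy ((mu ⟨l' - 1 - (i : ℕ), by omega⟩ : ℕ) + (i : ℤ) - (j : ℤ))
    else
      pzx ((lam ⟨(i : ℕ) - l', by have := i.isLt; omega⟩ : ℕ) - (i : ℤ) + (j : ℤ)))

/-- The staircase partition k! = (k, k−1, …, 2, 1). -/
def stc (k : ℕ) : Fin k → ℕ := fun i => k - (i : ℕ)

/-- The modified staircase (k+2, k−1, k−2, …, 2, 1) (length k). -/
def stcP (k : ℕ) : Fin k → ℕ := fun i => if (i : ℕ) = 0 then k + 2 else k - (i : ℕ)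

/-! ### Auxiliary: a Plücker-type three-term relation for determinants with two slots -/

open Matrix

set_option maxHeartbeats 1000000
set_option synthInstance.maxHeartbeats 400000

section DDdef

variable {K : Type*} {n : ℕ}

/-- Determinant of `M₀` with rows `r`, `s` replaced by `x`, `y`. -/
def DD [CommRing K] (M₀ : Matrix (Fin n) (Fin n) K) (r s : Fin n) (x y : Fin n → K) : K :=
  (Matrix.updateRow (Matrix.updateRow M₀ r x) s y).det

variable [CommRing K] {M₀ : Matrix (Fin n) (Fin n) K} {r s : Fin n}

lemma upd_comm (hrs : r ≠ s) (x y : Fin n → K) :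
    Matrix.updateRow (Matrix.updateRow M₀ r x) s y
      = Matrix.updateRow (Matrix.updateRow M₀ s y) r x := by
  ext i j
  rcases eq_or_ne i s with rfl | his
  · rw [Matrix.updateRow_self, Matrix.updateRow_ne hrs.symm, Matrix.updateRow_self]
  · rcases eq_or_ne i r with rfl | hir
    · rw [Matrix.updateRow_ne his, Matrix.updateRow_self, Matrix.updateRow_self]
    · rw [Matrix.updateRow_ne his, Matrix.updateRow_ne hir, Matrix.updateRow_ne hir,
        Matrix.updateRow_ne his]

lemma DD_add_left (hrs : r ≠ s) (x x' y : Fin n → K) :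
    DD M₀ r s (x + x') y = DD M₀ r s x y + DD M₀ r s x' y := by
  unfold DD
  rw [upd_comm hrs, Matrix.det_updateRow_add, ← upd_comm hrs, ← upd_comm hrs]

lemma DD_smul_left (hrs : r ≠ s) (c : K) (x y : Fin n → K) :
    DD M₀ r s (c • x) y = c * DD M₀ r s x y := by
  unfold DD
  rw [upd_comm hrs, Matrix.det_updateRow_smul, ← upd_comm hrs]

lemma DD_add_right (x y y' : Fin n → K) :
    DD M₀ r s x (y + y') = DD M₀ r s x y + DD M₀ r s x y' :=
  Matrix.det_updateRow_add _ _ _ _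

lemma DD_smul_right (c : K) (x y : Fin n → K) :
    DD M₀ r s x (c • y) = c * DD M₀ r s x y :=
  Matrix.det_updateRow_smul _ _ _ _

lemma DD_self (hrs : r ≠ s) (x : Fin n → K) : DD M₀ r s x x = 0 := by
  apply Matrix.det_zero_of_row_eq hrs
  rw [Matrix.updateRow_ne hrs, Matrix.updateRow_self, Matrix.updateRow_self]

lemma DD_neg (hrs : r ≠ s) (x y : Fin n → K) : DD M₀ r s y x = - DD M₀ r s x y := by
  have h := DD_self (M₀ := M₀) hrs (x + y)
  rw [DD_add_left hrs, DD_add_right, DD_add_right, DD_self hrs, DD_self hrs] at h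
  linear_combination h

lemma DD_zero_left (hrs : r ≠ s) (y : Fin n → K) : DD M₀ r s 0 y = 0 := by
  have h := DD_smul_left (M₀ := M₀) hrs 0 0 y
  simpa using h

lemma DD_row (hrs : r ≠ s) {i : Fin n} (hir : i ≠ r) (his : i ≠ s) (y : Fin n → K) :
    DD M₀ r s (M₀ i) y = 0 := by
  apply Matrix.det_zero_of_row_eq hir
  rw [Matrix.updateRow_ne his, Matrix.updateRow_ne hir, Matrix.updateRow_ne hrs,
    Matrix.updateRow_self]

end DDdef

section DDfield

variable {K : Type*} [Field K] {n : ℕ}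

lemma pluecker_decomp (M₀ : Matrix (Fin n) (Fin n) K) (r s : Fin n) (hrs : r ≠ s) :
    ∃ φ ψ : (Fin n → K) → K, ∀ x y, DD M₀ r s x y = φ x * ψ y - φ y * ψ x := by
  classical
  have hWl : ∀ x, x ∈ Submodule.span K
      (Set.range fun i : {i : Fin n // i ≠ r ∧ i ≠ s} => M₀ i.1) →
      ∀ y, DD M₀ r s x y = 0 := by
    intro x hx
    induction hx using Submodule.span_induction with
    | mem g hg =>
      obtain ⟨i, rfl⟩ := hg
      exact fun y => DD_row hrs i.2.1 i.2.2 y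
    | zero => exact fun y => DD_zero_left hrs y
    | add a b ha hb iha ihb =>
      exact fun y => by rw [DD_add_left hrs, iha y, ihb y, add_zero]
    | smul c a ha iha =>
      exact fun y => by rw [DD_smul_left hrs, iha y, mul_zero]
  have hWr : ∀ y, y ∈ Submodule.span K
      (Set.range fun i : {i : Fin n // i ≠ r ∧ i ≠ s} => M₀ i.1) →
      ∀ x, DD M₀ r s x y = 0 := by
    intro y hy x
    rw [DD_neg hrs y x, hWl y hy x, neg_zero]
  by_cases hli : LinearIndependent K (fun i : {i : Fin n // i ≠ r ∧ i ≠ s} => M₀ i.1)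
  · -- independent case: the form has rank ≤ 2 and decomposes
    obtain ⟨W', hcompl⟩ := Submodule.exists_isCompl (Submodule.span K
      (Set.range fun i : {i : Fin n // i ≠ r ∧ i ≠ s} => M₀ i.1))
    have hneq : (r : ℕ) ≠ (s : ℕ) := fun h => hrs (Fin.ext h)
    have hn2 : 2 ≤ n := by have h1 := r.2; have h2 := s.2; omega
    have hcard : Fintype.card {i : Fin n // i ≠ r ∧ i ≠ s} = n - 2 := by
      rw [Fintype.card_subtype]
      have hfil : Finset.filter (fun i : Fin n => i ≠ r ∧ i ≠ s) Finset.univ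
          = (Finset.univ \ {r, s} : Finset (Fin n)) := by
        ext i
        simp [not_or]
      rw [hfil, Finset.card_sdiff_of_subset (Finset.subset_univ _), Finset.card_univ, Fintype.card_fin,
        Finset.card_insert_of_notMem (by simp [hrs]), Finset.card_singleton]
    have hrank : Module.finrank K W' = 2 := by
      have h1 := Submodule.finrank_add_eq_of_isCompl hcompl
      rw [finrank_span_eq_card hli, hcard, Module.finrank_fin_fun] at h1
      omega
    let b : Module.Basis (Fin 2) K W' := Module.finBasisOfFinrankEq K W' hrank
    let pr : (Fin n → K) →ₗ[K] W' := W'.projectionOnto _ hcompl.symm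
    have hsub : ∀ x : Fin n → K, x - (pr x : Fin n → K) ∈ Submodule.span K
        (Set.range fun i : {i : Fin n // i ≠ r ∧ i ≠ s} => M₀ i.1) := by
      intro x
      have h2 := Submodule.projection_add_projection_eq_self hcompl.symm x
      have h3 : x - (pr x : Fin n → K) = _ := sub_eq_of_eq_add' h2.symm
      rw [h3]
      exact Submodule.coe_mem _
    have hdec : ∀ x y, DD M₀ r s x y
        = DD M₀ r s (pr x : Fin n → K) (pr y : Fin n → K) := by
      intro x y
      have e1 : DD M₀ r s x y = DD M₀ r s (pr x : Fin n → K) y := by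
        have h4 : x = (pr x : Fin n → K) + (x - (pr x : Fin n → K)) := by abel
        conv_lhs => rw [h4]
        rw [DD_add_left hrs, hWl _ (hsub x) y, add_zero]
      have e2 : DD M₀ r s (pr x : Fin n → K) y
          = DD M₀ r s (pr x : Fin n → K) (pr y : Fin n → K) := by
        have h4 : y = (pr y : Fin n → K) + (y - (pr y : Fin n → K)) := by abel
        conv_lhs => rw [h4]
        rw [DD_add_right, hWr _ (hsub y) _, add_zero]
      rw [e1, e2]
    have hz : ∀ z : W', (z : Fin n → K)
        = (b.repr z) 0 • (b 0).1 + (b.repr z) 1 • (b 1).1 := by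
      intro z
      have h5 := b.sum_repr z
      rw [Fin.sum_univ_two] at h5
      rw [← h5]
      simp
    refine ⟨fun x => (b.repr (pr x)) 0 * DD M₀ r s (b 0).1 (b 1).1,
      fun x => (b.repr (pr x)) 1, ?_⟩
    intro x y
    rw [hdec x y, hz (pr x), hz (pr y)]
    simp only [DD_add_left hrs, DD_add_right, DD_smul_left hrs, DD_smul_right,
      DD_self hrs, mul_zero, add_zero, zero_add]
    rw [DD_neg hrs (b 0).1 (b 1).1]
    ring
  · -- dependent case: everything vanishes
    refine ⟨fun _ => 0, fun _ => 0, fun x y => ?_⟩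
    have hnli : ¬ LinearIndependent K
        (fun i : Fin n => Matrix.updateRow (Matrix.updateRow M₀ r x) s y i) := by
      intro h
      apply hli
      have h2 := h.comp (Subtype.val : {i : Fin n // i ≠ r ∧ i ≠ s} → Fin n)
        Subtype.val_injective
      have h3 : (fun i : {i : Fin n // i ≠ r ∧ i ≠ s} => M₀ i.1)
          = (fun i : Fin n => Matrix.updateRow (Matrix.updateRow M₀ r x) s y i)
              ∘ Subtype.val := by
        funext i
        show M₀ i.1 = Matrix.updateRow (Matrix.updateRow M₀ r x) s y i.1
        rw [Matrix.updateRow_ne i.2.2, Matrix.updateRow_ne i.2.1]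
      rw [h3]
      exact h2
    have hdet : DD M₀ r s x y = 0 := by
      by_contra hd
      exact hnli (Matrix.linearIndependent_rows_iff_isUnit.mpr
        ((Matrix.isUnit_iff_isUnit_det _).mpr (isUnit_iff_ne_zero.mpr hd)))
    rw [hdet]
    ring

lemma pluecker_field (M₀ : Matrix (Fin n) (Fin n) K) (r s : Fin n) (hrs : r ≠ s)
    (a b c d : Fin n → K) :
    DD M₀ r s a b * DD M₀ r s c d - DD M₀ r s a c * DD M₀ r s b d
      + DD M₀ r s a d * DD M₀ r s b c = 0 := by
  obtain ⟨φ, ψ, h⟩ := pluecker_decomp M₀ r s hrs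
  simp only [h]
  ring

end DDfield

lemma pluecker_R2 {n : ℕ} (M₀ : Matrix (Fin n) (Fin n) R2) (r s : Fin n) (hrs : r ≠ s)
    (a b c d : Fin n → R2) :
    DD M₀ r s a b * DD M₀ r s c d - DD M₀ r s a c * DD M₀ r s b d
      + DD M₀ r s a d * DD M₀ r s b c = 0 := by
  have hinj : Function.Injective (algebraMap R2 (FractionRing R2)) :=
    IsFractionRing.injective _ _
  apply hinj
  have hmap : ∀ x y : Fin n → R2,
      algebraMap R2 (FractionRing R2) (DD M₀ r s x y)
        = DD (M₀.map (algebraMap R2 (FractionRing R2))) r s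
            (fun j => algebraMap R2 (FractionRing R2) (x j))
            (fun j => algebraMap R2 (FractionRing R2) (y j)) := by
    intro x y
    unfold DD
    rw [RingHom.map_det]
    congr 1
    ext i j
    simp only [RingHom.mapMatrix_apply, Matrix.map_apply, Matrix.updateRow_apply]
    split_ifs <;> rfl
  rw [map_zero, map_add, map_sub, _root_.map_mul, _root_.map_mul, _root_.map_mul,
    hmap, hmap, hmap, hmap, hmap, hmap]
  exact pluecker_field _ r s hrs _ _ _ _

/-! ### The rows appearing in the universal-character determinants -/

/-- q-row with parameter `k`. -/
def Qrow (k : ℕ) {N : ℕ} : Fin N → R2 := fun j => qzy (2 * (k : ℤ) + 1 - (j : ℤ))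

/-- p-row with parameter `k`. -/
def Prow (k : ℕ) {N : ℕ} : Fin N → R2 := fun j => pzx ((N : ℤ) - 2 * (k : ℤ) + (j : ℤ))

/-- The base matrix for `S_{[u!,v!]}`. -/
def baseM (v : ℕ) {N : ℕ} : Matrix (Fin N) (Fin N) R2 :=
  Matrix.of fun i j => if (i : ℕ) < v then Qrow i j else Prow i j

/-- S_{[(u+1)!,(v−1)!]}·S_{[(u−1)!,(v+1)!]}
− S_{[u!,(v+2,v−1,…,1)]}·S_{[(u+2,u−1,…,1),v!]}
+ S_{[(u+2,u−1,…,1),(v+2,v−1,…,1)]}·S_{[u!,v!]} = 0. -/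
theorem stmt16 (u v : ℕ) (hu : 1 ≤ u) (hv : 1 ≤ v) :
    ucChar (u + 1) (v - 1) (stc (u + 1)) (stc (v - 1)) *
        ucChar (u - 1) (v + 1) (stc (u - 1)) (stc (v + 1)) -
      ucChar u v (stc u) (stcP v) * ucChar u v (stcP u) (stc v) +
      ucChar u v (stcP u) (stcP v) * ucChar u v (stc u) (stc v) = 0 := by
  have hr : v - 1 < v + u := by omega
  have hs : v < v + u := by omega
  have hrs : (⟨v - 1, hr⟩ : Fin (v + u)) ≠ ⟨v, hs⟩ := by
    simp only [ne_eq, Fin.mk.injEq]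
    omega
  have key := pluecker_R2 (baseM v) ⟨v - 1, hr⟩ ⟨v, hs⟩ hrs
    (Qrow (v - 1)) (Qrow v) (Prow (v - 1)) (Prow v)
  have e1 : ucChar u v (stc u) (stc v)
      = DD (baseM v) ⟨v - 1, hr⟩ ⟨v, hs⟩ (Qrow (v - 1)) (Prow v) := by
    unfold ucChar DD
    congr 1
    refine Matrix.ext fun i j => ?_
    obtain ⟨i, hi⟩ := i; obtain ⟨j, hj⟩ := j
    simp only [Matrix.of_apply, Matrix.updateRow_apply, baseM, Qrow, Prow, stc, stcP,
      Fin.mk.injEq]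
    split_ifs <;> first | (congr 1; omega) | omega
  have e2 : ucChar u v (stcP u) (stc v)
      = DD (baseM v) ⟨v - 1, hr⟩ ⟨v, hs⟩ (Qrow (v - 1)) (Prow (v - 1)) := by
    unfold ucChar DD
    congr 1
    refine Matrix.ext fun i j => ?_
    obtain ⟨i, hi⟩ := i; obtain ⟨j, hj⟩ := j
    simp only [Matrix.of_apply, Matrix.updateRow_apply, baseM, Qrow, Prow, stc, stcP,
      Fin.mk.injEq]
    split_ifs <;> first | (congr 1; omega) | omega
  have e3 : ucChar u v (stc u) (stcP v)
      = DD (baseM v) ⟨v - 1, hr⟩ ⟨v, hs⟩ (Qrow v) (Prow v) := by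
    unfold ucChar DD
    congr 1
    refine Matrix.ext fun i j => ?_
    obtain ⟨i, hi⟩ := i; obtain ⟨j, hj⟩ := j
    simp only [Matrix.of_apply, Matrix.updateRow_apply, baseM, Qrow, Prow, stc, stcP,
      Fin.mk.injEq]
    split_ifs <;> first | (congr 1; omega) | omega
  have e4 : ucChar u v (stcP u) (stcP v)
      = DD (baseM v) ⟨v - 1, hr⟩ ⟨v, hs⟩ (Qrow v) (Prow (v - 1)) := by
    unfold ucChar DD
    congr 1
    refine Matrix.ext fun i j => ?_
    obtain ⟨i, hi⟩ := i; obtain ⟨j, hj⟩ := j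
    simp only [Matrix.of_apply, Matrix.updateRow_apply, baseM, Qrow, Prow, stc, stcP,
      Fin.mk.injEq]
    split_ifs <;> first | (congr 1; omega) | omega
  have e5 : ucChar (u + 1) (v - 1) (stc (u + 1)) (stc (v - 1))
      = DD (baseM v) ⟨v - 1, hr⟩ ⟨v, hs⟩ (Prow (v - 1)) (Prow v) := by
    unfold ucChar DD
    refine Eq.trans (Matrix.det_submatrix_equiv_self
      (finCongr (show v + u = (v - 1) + (u + 1) by omega)) _).symm ?_
    congr 1
    refine Matrix.ext fun i j => ?_
    obtain ⟨i, hi⟩ := i; obtain ⟨j, hj⟩ := j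
    simp only [Matrix.submatrix_apply, finCongr_apply, Fin.cast_mk, Matrix.of_apply,
      Matrix.updateRow_apply, baseM, Qrow, Prow, stc, stcP, Fin.mk.injEq]
    split_ifs <;> first | (congr 1; omega) | omega
  have e6 : ucChar (u - 1) (v + 1) (stc (u - 1)) (stc (v + 1))
      = DD (baseM v) ⟨v - 1, hr⟩ ⟨v, hs⟩ (Qrow (v - 1)) (Qrow v) := by
    unfold ucChar DD
    refine Eq.trans (Matrix.det_submatrix_equiv_self
      (finCongr (show v + u = (v + 1) + (u - 1) by omega)) _).symm ?_
    congr 1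
    refine Matrix.ext fun i j => ?_
    obtain ⟨i, hi⟩ := i; obtain ⟨j, hj⟩ := j
    simp only [Matrix.submatrix_apply, finCongr_apply, Fin.cast_mk, Matrix.of_apply,
      Matrix.updateRow_apply, baseM, Qrow, Prow, stc, stcP, Fin.mk.injEq]
    split_ifs <;> first | (congr 1; omega) | omega
  rw [e1, e2, e3, e4, e5, e6]
  linear_combination key

end
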